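/- Let k be a field of characteristic p > 0, G a finite p-group, and A a trace-surjective commutative G-algebra with a point w ∈ A (tr(w) = 1). Then A = ⊕_{g∈G} A^G·(w·g); in particular A is a free A^G-module of rank |G| and a free A^G[G]-module of rank one. -/

import Mathlib

open Finset

lemma field_kernel_triv {p : ℕ} [Fact p.Prime]
    {F : Type*} [Field F] [CharP F p]
    {G : Type*} [Group G] [Fintype G] (hG : IsPGroup p G)
    (y : G → F) (hy : (∑ g : G, y g) = 1)
    (v : G → F) (hv : ∀ g : G, (∑ h : G, y (g * h) * v h) = 0) : v = 0 := by
  classical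
  by_contra hv0
  letI : Algebra (ZMod p) F := ZMod.algebra F p
  -- the solution space as an F-submodule
  set K : Submodule F (G → F) :=
    { carrier := {u | ∀ g : G, (∑ h : G, y (g * h) * u h) = 0}
      add_mem' := by
        intro a b ha hb g
        simp only [Set.mem_setOf_eq] at *
        simp [Pi.add_apply, mul_add, Finset.sum_add_distrib, ha g, hb g]
      zero_mem' := by intro g; simp
      smul_mem' := by
        intro c u hu g
        simp only [Set.mem_setOf_eq] at *
        have : (∑ h : G, y (g*h) * (c • u) h) = c * ∑ h : G, y (g*h) * u h := by
          rw [Finset.mul_sum]; congr 1; ext h; simp [Pi.smul_apply]; ring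
        rw [this, hu g, mul_zero] } with hK
  have hvK : v ∈ K := hv
  -- stability of K under translation
  have hKstab : ∀ (σ : G), ∀ u ∈ K, (fun h => u (σ * h)) ∈ K := by
    intro σ u hu g
    have h1 := hu (g * σ⁻¹)
    rw [← h1]
    exact Fintype.sum_equiv (Equiv.mulLeft σ) _ _ (fun h => by simp [mul_assoc])
  -- the (ZMod p)-span of the orbit of v
  set S : Set (G → F) := Set.range (fun σ : G => (fun h => v (σ * h))) with hS
  set W : Submodule (ZMod p) (G → F) := Submodule.span (ZMod p) S with hW
  have hSK : S ⊆ (K.restrictScalars (ZMod p) : Set (G → F)) := by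
    rintro u ⟨σ, rfl⟩
    exact hKstab σ v hvK
  have hWK : (W : Set (G → F)) ⊆ (K : Set (G → F)) := Submodule.span_le.mpr hSK
  have hSfin : S.Finite := Set.finite_range _
  haveI : Module.Finite (ZMod p) W := Module.Finite.span_of_finite _ hSfin
  haveI : Finite W := Module.finite_of_finite (ZMod p)
  haveI : Fintype W := Fintype.ofFinite _
  -- W is stable under translations
  have hWstab : ∀ (σ : G), ∀ u ∈ W, (fun h => u (σ * h)) ∈ W := by
    intro σ u hu
    let L : (G → F) →ₗ[ZMod p] (G → F) :=
      { toFun := fun x => (fun h => x (σ * h))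
        map_add' := fun a b => rfl
        map_smul' := fun c a => rfl }
    have : W.map L ≤ W := by
      rw [hW, Submodule.map_span]
      apply Submodule.span_le.mpr
      apply Set.Subset.trans _ Submodule.subset_span
      rintro x ⟨u', ⟨τ, rfl⟩, rfl⟩
      exact ⟨τ * σ, by funext h; simp [L, mul_assoc]⟩
    exact this (Submodule.mem_map_of_mem hu)
  -- G-action on W
  letI : SMul G W := ⟨fun σ x => ⟨fun h => (x : G → F) (σ⁻¹ * h), hWstab σ⁻¹ x x.2⟩⟩
  have smul_def : ∀ (σ : G) (x : W) (h : G), ((σ • x : W) : G → F) h = (x : G → F) (σ⁻¹ * h) :=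
    fun σ x h => rfl
  letI : MulAction G W :=
    { one_smul := by intro x; apply Subtype.ext; funext h; simp [smul_def]
      mul_smul := by
        intro σ τ x; apply Subtype.ext; funext h
        show (x : G → F) ((σ * τ)⁻¹ * h) = (x : G → F) (τ⁻¹ * (σ⁻¹ * h))
        rw [mul_inv_rev, mul_assoc] }
  -- counting fixed points
  have hcard : Fintype.card W = p ^ (Module.finrank (ZMod p) W) := by
    have := Module.card_eq_pow_finrank (K := ZMod p) (V := W)
    simpa [ZMod.card] using this
  have hvW : v ∈ W := by
    apply Submodule.subset_span
    exact ⟨1, by funext h; simp⟩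
  haveI : Nontrivial W := by
    refine ⟨⟨⟨v, hvW⟩, 0, ?_⟩⟩
    simp only [ne_eq, Submodule.mk_eq_zero]
    exact hv0
  have hrank : 0 < Module.finrank (ZMod p) W := Module.finrank_pos
  have hpdvd : p ∣ Fintype.card W := by
    rw [hcard]; exact dvd_pow_self p hrank.ne'
  have hmod := IsPGroup.card_modEq_card_fixedPoints (hG := hG) (α := W)
  have hfixdvd : p ∣ Nat.card (MulAction.fixedPoints G W) := by
    have h0 : Nat.card W ≡ 0 [MOD p] := by
      rw [Nat.card_eq_fintype_card]
      exact (Nat.modEq_zero_iff_dvd).mpr hpdvd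
    exact (Nat.modEq_zero_iff_dvd).mp ((hmod.symm.trans h0))
  -- 0 is a fixed point
  have h0fix : (0 : W) ∈ MulAction.fixedPoints G W := by
    intro σ; apply Subtype.ext; funext h; rfl
  haveI : Fintype (MulAction.fixedPoints G W) := Fintype.ofFinite _
  rw [Nat.card_eq_fintype_card] at hfixdvd
  have hpos : 0 < Fintype.card (MulAction.fixedPoints G W) :=
    Fintype.card_pos_iff.mpr ⟨⟨0, h0fix⟩⟩
  have hcardfix : 1 < Fintype.card (MulAction.fixedPoints G W) :=
    lt_of_lt_of_le (Fact.out : p.Prime).one_lt (Nat.le_of_dvd hpos hfixdvd)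
  obtain ⟨x, hxne⟩ := Fintype.exists_ne_of_one_lt_card hcardfix ⟨0, h0fix⟩
  -- x is a nonzero constant function in K
  have hxconst : ∀ h : G, ((x.1 : W) : G → F) h = ((x.1 : W) : G → F) 1 := by
    intro h
    have hfix : h⁻¹ • (x.1 : W) = (x.1 : W) := x.2 h⁻¹
    have := congrArg (fun u : W => (u : G → F) 1) hfix
    simpa [smul_def] using this
  have hxK : ((x.1 : W) : G → F) ∈ K := hWK (x.1 : W).2
  have hx1 : ((x.1 : W) : G → F) 1 = 0 := by
    have h1K := hxK 1
    have heq : (∑ h : G, y (1 * h) * ((x.1 : W) : G → F) h)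
        = (∑ h : G, y h) * ((x.1 : W) : G → F) 1 := by
      rw [Finset.sum_mul]
      congr 1; ext h; rw [one_mul, hxconst h]
    rw [heq, hy, one_mul] at h1K
    exact h1K
  apply hxne
  apply Subtype.ext; apply Subtype.ext; funext h
  show ((x.1 : W) : G → F) h = 0
  rw [hxconst h, hx1]


/-- Key lemma: the "group matrix" of the orbit of a point is invertible. -/
lemma group_matrix_isUnit_det {p : ℕ} [Fact p.Prime] (k : Type*) [Field k] [CharP k p]
    {G : Type*} [Group G] [Fintype G] [DecidableEq G]
    {A : Type*} [CommRing A] [Algebra k A] [MulSemiringAction G A] [SMulCommClass G k A]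
    (hG : IsPGroup p G) (w : A) (hw : (∑ g : G, g • w) = 1) :
    IsUnit (Matrix.of fun g h : G => (g * h) • w).det := by
  classical
  rcases subsingleton_or_nontrivial A with hA | hA
  · exact isUnit_of_subsingleton _
  by_contra hdet
  haveI : CharP A p := charP_of_injective_ringHom (algebraMap k A).injective p
  obtain ⟨m, hm, hin⟩ := Ideal.exists_le_maximal (Ideal.span {(Matrix.of fun g h : G => (g * h) • w).det})
    (by rwa [Ne, Ideal.span_singleton_eq_top])
  haveI := hm
  letI : Field (A ⧸ m) := Ideal.Quotient.field m
  have hp0 : (p : A ⧸ m) = 0 := by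
    rw [← map_natCast (Ideal.Quotient.mk m), CharP.cast_eq_zero A p, map_zero]
  haveI : CharP (A ⧸ m) (ringChar (A ⧸ m)) := ringChar.charP _
  have hd : ringChar (A ⧸ m) ∣ p := ringChar.dvd hp0
  haveI : CharP (A ⧸ m) p := by
    rcases (Fact.out : p.Prime).eq_one_or_self_of_dvd _ hd with h1 | hp
    · exact absurd h1 CharP.ringChar_ne_one
    · exact hp ▸ ringChar.charP _
  have hy : (∑ s : G, Ideal.Quotient.mk m (s • w)) = 1 := by
    rw [← map_sum, hw, map_one]
  have hdet0 : ((Matrix.of fun g h : G => (g * h) • w).map (Ideal.Quotient.mk m)).det = 0 := by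
    rw [show (Matrix.of fun g h : G => (g * h) • w).map (Ideal.Quotient.mk m)
        = (Ideal.Quotient.mk m).mapMatrix (Matrix.of fun g h : G => (g * h) • w) from rfl,
      ← RingHom.map_det]
    exact Ideal.Quotient.eq_zero_iff_mem.mpr (hin (Ideal.subset_span rfl))
  obtain ⟨v, hvne, hv0⟩ := (Matrix.exists_mulVec_eq_zero_iff).mpr hdet0
  apply hvne
  apply field_kernel_triv hG (fun s => Ideal.Quotient.mk m (s • w)) hy v
  intro g
  have := congrFun hv0 g
  simpa [Matrix.mulVec, dotProduct, Matrix.map] using this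



/-- The subalgebra of `G`-invariants of a `G`-algebra `A`. -/
def invariantSubalgebra (k G A : Type*) [CommSemiring k] [Group G] [CommRing A] [Algebra k A]
    [MulSemiringAction G A] [SMulCommClass G k A] : Subalgebra k A where
  carrier := {a | ∀ g : G, g • a = a}
  add_mem' := by intro a b ha hb g; rw [smul_add, ha g, hb g]
  mul_mem' := by intro a b ha hb g; rw [smul_mul', ha g, hb g]
  algebraMap_mem' := by
    intro c g
    rw [Algebra.algebraMap_eq_smul_one, smul_comm, smul_one]
  one_mem' := fun g => smul_one g
  zero_mem' := fun g => smul_zero g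

/-- If `A` is a trace-surjective commutative `G`-algebra with a point `w`
(`tr w = 1`), then `A = ⊕_{g∈G} A^G·(w·g)`: the orbit of `w` is a basis of `A` as a module
over the invariant ring `A^G` (hence `A` is free of rank `|G|` over `A^G`, and free of rank
one over the group ring `A^G[G]`). -/
theorem point_orbit_basis_over_invariants
    {p : ℕ} [Fact p.Prime] (k : Type*) [Field k] [CharP k p]
    (G : Type*) [Group G] [Fintype G] (hG : IsPGroup p G)
    (A : Type*) [CommRing A] [Algebra k A] [MulSemiringAction G A] [SMulCommClass G k A]
    (hts : ∀ b : A, (∀ g : G, g • b = b) → ∃ x : A, (∑ g : G, g • x) = b)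
    (w : A) (hw : (∑ g : G, g • w) = 1) :
    ∃ b : Module.Basis G (invariantSubalgebra k G A) A, ∀ g : G, b g = g • w := by
  classical
  set R := invariantSubalgebra k G A with hR
  set M : Matrix G G A := Matrix.of fun g h : G => (g * h) • w with hM
  have hMdet : IsUnit M.det := group_matrix_isUnit_det k hG w hw
  haveI : Invertible M := M.invertibleOfIsUnitDet hMdet
  have hinj : ∀ u₁ u₂ : G → A, M.mulVec u₁ = M.mulVec u₂ → u₁ = u₂ := by
    intro u₁ u₂ h
    have h1 : (⅟M).mulVec (M.mulVec u₁) = (⅟M).mulVec (M.mulVec u₂) := by rw [h]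
    rwa [Matrix.mulVec_mulVec, Matrix.mulVec_mulVec, invOf_mul_self, Matrix.one_mulVec,
      Matrix.one_mulVec] at h1
  -- linear independence
  have hli : LinearIndependent R (fun g : G => g • w) := by
    rw [Fintype.linearIndependent_iff]
    intro c hc g0
    have key : M.mulVec (fun h => (c h : A)) = M.mulVec (fun _ => (0 : A)) := by
      funext g
      have hg : g • (∑ h : G, c h • (h • w)) = g • (0 : A) := by rw [hc]
      rw [smul_zero, Finset.smul_sum] at hg
      have : ∀ h : G, g • (c h • (h • w)) = M g h * (c h : A) := by
        intro h
        have hsm : (c h • (h • w) : A) = (c h : A) * (h • w) := rfl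
        rw [hsm, smul_mul', (c h).2 g, smul_smul]
        rw [mul_comm]
        rfl
      rw [Finset.sum_congr rfl (fun h _ => this h)] at hg
      simpa [Matrix.mulVec, dotProduct] using hg
    have := hinj _ _ key
    exact Subtype.ext (congrFun this g0)
  -- spanning
  have hspan : ⊤ ≤ Submodule.span R (Set.range fun g : G => g • w) := by
    intro a _
    set u : G → A := (⅟M).mulVec (fun g => g • a) with hu
    have hMu : M.mulVec u = fun g => g • a := by
      rw [hu, Matrix.mulVec_mulVec, mul_invOf_self, Matrix.one_mulVec]
    have huinv : ∀ h σ : G, σ • u h = u h := by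
      intro h σ
      have h2 : M.mulVec (fun t => σ • u t) = M.mulVec u := by
        funext g
        have e1 : (M.mulVec fun t => σ • u t) g = ∑ t : G, ((g * t) • w) * σ • u t := by
          simp [Matrix.mulVec, dotProduct, hM]
        have e2 : σ • (M.mulVec u (σ⁻¹ * g)) = ∑ t : G, ((g * t) • w) * σ • u t := by
          have e3 : M.mulVec u (σ⁻¹ * g) = ∑ t : G, ((σ⁻¹ * g * t) • w) * u t := by
            simp [Matrix.mulVec, dotProduct, hM]
          rw [e3, Finset.smul_sum]
          refine Finset.sum_congr rfl (fun t _ => ?_)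
          rw [smul_mul', smul_smul]
          congr 2
          group
        rw [e1, ← e2, hMu]
        show σ • ((σ⁻¹ * g) • a) = g • a
        rw [smul_smul, mul_inv_cancel_left]
      exact congrFun (hinj _ _ h2) h
    have ha : a = ∑ h : G, (⟨u h, fun σ => huinv h σ⟩ : R) • (h • w) := by
      have h1 : M.mulVec u 1 = a := by rw [hMu]; exact one_smul G a
      have h2 : M.mulVec u 1 = ∑ h : G, ((1 * h) • w) * u h := by
        simp [Matrix.mulVec, dotProduct, hM]
      rw [← h1, h2]
      refine Finset.sum_congr rfl (fun h _ => ?_)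
      rw [one_mul]
      show (h • w) * u h = u h * (h • w)
      ring
    rw [ha]
    exact Submodule.sum_mem _ fun h _ =>
      Submodule.smul_mem _ _ (Submodule.subset_span ⟨h, rfl⟩)
  exact ⟨Module.Basis.mk hli hspan, fun g => Module.Basis.mk_apply hli hspan g⟩
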